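/- The function φ₁₃(p,q) = (p³ − p)/(1 + p²)⁴·q⁵ + (21p⁵ + 2p³ − 19p)/(12(1 + p²)⁴)·q³ + (3p⁷ + 4p⁵ − p³ − 2p)/(4(1 + p²)⁴)·q satisfies the equation (1 + p²)φ_pp + 2pq·φ_pq + (1 + q²)φ_qq = 0 for all real p, q. -/

import Mathlib

noncomputable def pd₁ (f : ℝ → ℝ → ℝ) : ℝ → ℝ → ℝ := fun p q => deriv (fun x => f x q) p
noncomputable def pd₂ (f : ℝ → ℝ → ℝ) : ℝ → ℝ → ℝ := fun p q => deriv (fun y => f p y) q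

/- auxiliary definitions -/

noncomputable def φLeg : ℝ → ℝ → ℝ := fun a b =>
  (a ^ 3 - a) / (1 + a ^ 2) ^ 4 * b ^ 5 + (21 * a ^ 5 + 2 * a ^ 3 - 19 * a) / (12 * (1 + a ^ 2) ^ 4) * b ^ 3 + (3 * a ^ 7 + 4 * a ^ 5 - a ^ 3 - 2 * a) / (4 * (1 + a ^ 2) ^ 4) * b

noncomputable def G1 : ℝ → ℝ → ℝ := fun p q =>
  (-5 * p ^ 4 + 10 * p ^ 2 - 1) / (1 + p ^ 2) ^ 5 * q ^ 5
  + (-63 * p ^ 6 + 95 * p ^ 4 + 139 * p ^ 2 - 19) / (12 * (1 + p ^ 2) ^ 5) * q ^ 3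
  + (-3 * p ^ 8 + 9 * p ^ 6 + 25 * p ^ 4 + 11 * p ^ 2 - 2) / (4 * (1 + p ^ 2) ^ 5) * q

noncomputable def G2 : ℝ → ℝ → ℝ := fun p q =>
  (30 * p ^ 5 - 100 * p ^ 3 + 30 * p) / (1 + p ^ 2) ^ 6 * q ^ 5
  + (21 * p ^ 7 - 79 * p ^ 5 - 61 * p ^ 3 + 39 * p) / (1 + p ^ 2) ^ 6 * q ^ 3
  + (3 * p ^ 9 - 30 * p ^ 7 - 48 * p ^ 5 + 6 * p ^ 3 + 21 * p) / (2 * (1 + p ^ 2) ^ 6) * q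

noncomputable def H1 : ℝ → ℝ → ℝ := fun p q =>
  (p ^ 3 - p) / (1 + p ^ 2) ^ 4 * (5 * q ^ 4)
  + (21 * p ^ 5 + 2 * p ^ 3 - 19 * p) / (12 * (1 + p ^ 2) ^ 4) * (3 * q ^ 2)
  + (3 * p ^ 7 + 4 * p ^ 5 - p ^ 3 - 2 * p) / (4 * (1 + p ^ 2) ^ 4)

noncomputable def H2 : ℝ → ℝ → ℝ := fun p q =>
  (p ^ 3 - p) / (1 + p ^ 2) ^ 4 * (20 * q ^ 3)
  + (21 * p ^ 5 + 2 * p ^ 3 - 19 * p) / (12 * (1 + p ^ 2) ^ 4) * (6 * q)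

noncomputable def Kc : ℝ → ℝ → ℝ := fun p q =>
  (-5 * p ^ 4 + 10 * p ^ 2 - 1) / (1 + p ^ 2) ^ 5 * (5 * q ^ 4)
  + (-63 * p ^ 6 + 95 * p ^ 4 + 139 * p ^ 2 - 19) / (12 * (1 + p ^ 2) ^ 5) * (3 * q ^ 2)
  + (-3 * p ^ 8 + 9 * p ^ 6 + 25 * p ^ 4 + 11 * p ^ 2 - 2) / (4 * (1 + p ^ 2) ^ 5)

/- basic derivative facts -/

private lemma hD2 (p : ℝ) : HasDerivAt (fun x : ℝ => 1 + x ^ 2) (2 * p) p := by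
  simpa using ((hasDerivAt_pow 2 p).const_add 1)

private lemma hterm {N D : ℝ → ℝ} {N' D' : ℝ} (m : ℝ) {p : ℝ}
    (hN : HasDerivAt N N' p) (hD : HasDerivAt D D' p) (hne : D p ≠ 0) :
    HasDerivAt (fun x => N x / D x * m) ((N' * D p - N p * D') / (D p) ^ 2 * m) p :=
  (hN.div hD hne).mul_const m

private lemma hd4 (p : ℝ) : HasDerivAt (fun x : ℝ => (1 + x ^ 2) ^ 4) (8 * p * (1 + p ^ 2) ^ 3) p := by
  have := (hD2 p).pow 4
  refine this.congr_deriv ?_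
  push_cast; ring

private lemma hd5 (p : ℝ) : HasDerivAt (fun x : ℝ => (1 + x ^ 2) ^ 5) (10 * p * (1 + p ^ 2) ^ 4) p := by
  have := (hD2 p).pow 5
  refine this.congr_deriv ?_
  push_cast; ring

private lemma hn1 (p : ℝ) : HasDerivAt (fun x : ℝ => x ^ 3 - x) (3 * p ^ 2 - 1) p := by
  exact ((hasDerivAt_pow 3 p).sub (hasDerivAt_id' p)).congr_deriv (by norm_num)

private lemma hn2 (p : ℝ) : HasDerivAt (fun x : ℝ => 21 * x ^ 5 + 2 * x ^ 3 - 19 * x)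
    (105 * p ^ 4 + 6 * p ^ 2 - 19) p := by
  have := ((HasDerivAt.const_mul (21:ℝ) (hasDerivAt_pow 5 p)).add
    (HasDerivAt.const_mul (2:ℝ) (hasDerivAt_pow 3 p))).sub
    (HasDerivAt.const_mul (19:ℝ) (hasDerivAt_id' p))
  refine this.congr_deriv ?_
  push_cast; ring

private lemma hn3 (p : ℝ) : HasDerivAt (fun x : ℝ => 3 * x ^ 7 + 4 * x ^ 5 - x ^ 3 - 2 * x)
    (21 * p ^ 6 + 20 * p ^ 4 - 3 * p ^ 2 - 2) p := by
  have := (((HasDerivAt.const_mul (3:ℝ) (hasDerivAt_pow 7 p)).add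
    (HasDerivAt.const_mul (4:ℝ) (hasDerivAt_pow 5 p))).sub
    (hasDerivAt_pow 3 p)).sub
    (HasDerivAt.const_mul (2:ℝ) (hasDerivAt_id' p))
  refine this.congr_deriv ?_
  push_cast; ring

private lemma hm1 (p : ℝ) : HasDerivAt (fun x : ℝ => -5 * x ^ 4 + 10 * x ^ 2 - 1)
    (-20 * p ^ 3 + 20 * p) p := by
  have := ((HasDerivAt.const_mul (-5:ℝ) (hasDerivAt_pow 4 p)).add
    (HasDerivAt.const_mul (10:ℝ) (hasDerivAt_pow 2 p))).sub_const 1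
  refine this.congr_deriv ?_
  push_cast; ring

private lemma hm2 (p : ℝ) : HasDerivAt
    (fun x : ℝ => -63 * x ^ 6 + 95 * x ^ 4 + 139 * x ^ 2 - 19)
    (-378 * p ^ 5 + 380 * p ^ 3 + 278 * p) p := by
  have := (((HasDerivAt.const_mul (-63:ℝ) (hasDerivAt_pow 6 p)).add
    (HasDerivAt.const_mul (95:ℝ) (hasDerivAt_pow 4 p))).add
    (HasDerivAt.const_mul (139:ℝ) (hasDerivAt_pow 2 p))).sub_const 19
  refine this.congr_deriv ?_
  push_cast; ring

private lemma hm3 (p : ℝ) : HasDerivAt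
    (fun x : ℝ => -3 * x ^ 8 + 9 * x ^ 6 + 25 * x ^ 4 + 11 * x ^ 2 - 2)
    (-24 * p ^ 7 + 54 * p ^ 5 + 100 * p ^ 3 + 22 * p) p := by
  have := ((((HasDerivAt.const_mul (-3:ℝ) (hasDerivAt_pow 8 p)).add
    (HasDerivAt.const_mul (9:ℝ) (hasDerivAt_pow 6 p))).add
    (HasDerivAt.const_mul (25:ℝ) (hasDerivAt_pow 4 p))).add
    (HasDerivAt.const_mul (11:ℝ) (hasDerivAt_pow 2 p))).sub_const 2
  refine this.congr_deriv ?_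
  push_cast; ring

/- first p-derivative of φ -/

private lemma hphi1 (p q : ℝ) : HasDerivAt (fun x => φLeg x q) (G1 p q) p := by
  have h0 : (0:ℝ) < 1 + p ^ 2 := by positivity
  have t1 := hterm (q ^ 5) (hn1 p) (hd4 p) (show ((1:ℝ) + p ^ 2) ^ 4 ≠ 0 by positivity)
  have t2 := hterm (q ^ 3) (hn2 p) ((hd4 p).const_mul 12)
    (show (12:ℝ) * (1 + p ^ 2) ^ 4 ≠ 0 by positivity)
  have t3 := hterm q (hn3 p) ((hd4 p).const_mul 4)
    (show (4:ℝ) * (1 + p ^ 2) ^ 4 ≠ 0 by positivity)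
  have h := (t1.add t2).add t3
  refine h.congr_deriv ?_
  have hne : (1:ℝ) + p ^ 2 ≠ 0 := ne_of_gt h0
  unfold G1
  field_simp
  ring

/- second p-derivative -/

private lemma hphi11 (p q : ℝ) : HasDerivAt (fun x => G1 x q) (G2 p q) p := by
  have h0 : (0:ℝ) < 1 + p ^ 2 := by positivity
  have t1 := hterm (q ^ 5) (hm1 p) (hd5 p) (show ((1:ℝ) + p ^ 2) ^ 5 ≠ 0 by positivity)
  have t2 := hterm (q ^ 3) (hm2 p) ((hd5 p).const_mul 12)
    (show (12:ℝ) * (1 + p ^ 2) ^ 5 ≠ 0 by positivity)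
  have t3 := hterm q (hm3 p) ((hd5 p).const_mul 4)
    (show (4:ℝ) * (1 + p ^ 2) ^ 5 ≠ 0 by positivity)
  have h := (t1.add t2).add t3
  refine h.congr_deriv ?_
  have hne : (1:ℝ) + p ^ 2 ≠ 0 := ne_of_gt h0
  unfold G2
  field_simp
  ring

/- q-derivatives -/

private lemma hphi2 (p q : ℝ) : HasDerivAt (fun y => φLeg p y) (H1 p q) q := by
  have t1 := HasDerivAt.const_mul ((p ^ 3 - p) / (1 + p ^ 2) ^ 4) (hasDerivAt_pow 5 q)
  have t2 := HasDerivAt.const_mul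
    ((21 * p ^ 5 + 2 * p ^ 3 - 19 * p) / (12 * (1 + p ^ 2) ^ 4)) (hasDerivAt_pow 3 q)
  have t3 := HasDerivAt.const_mul
    ((3 * p ^ 7 + 4 * p ^ 5 - p ^ 3 - 2 * p) / (4 * (1 + p ^ 2) ^ 4)) (hasDerivAt_id' q)
  have h := (t1.add t2).add t3
  refine h.congr_deriv ?_
  unfold H1
  push_cast; ring

private lemma hphi22 (p q : ℝ) : HasDerivAt (fun y => H1 p y) (H2 p q) q := by
  have t1 := HasDerivAt.const_mul ((p ^ 3 - p) / (1 + p ^ 2) ^ 4)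
    (HasDerivAt.const_mul (5:ℝ) (hasDerivAt_pow 4 q))
  have t2 := HasDerivAt.const_mul
    ((21 * p ^ 5 + 2 * p ^ 3 - 19 * p) / (12 * (1 + p ^ 2) ^ 4))
    (HasDerivAt.const_mul (3:ℝ) (hasDerivAt_pow 2 q))
  have t3 := hasDerivAt_const q ((3 * p ^ 7 + 4 * p ^ 5 - p ^ 3 - 2 * p) / (4 * (1 + p ^ 2) ^ 4))
  have h := (t1.add t2).add t3
  refine h.congr_deriv ?_
  unfold H2
  push_cast; ring

/- mixed derivative : p-derivative of H1 -/

private lemma hphi12 (p q : ℝ) : HasDerivAt (fun x => H1 x q) (Kc p q) p := by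
  have h0 : (0:ℝ) < 1 + p ^ 2 := by positivity
  have t1 := hterm (5 * q ^ 4) (hn1 p) (hd4 p) (show ((1:ℝ) + p ^ 2) ^ 4 ≠ 0 by positivity)
  have t2 := hterm (3 * q ^ 2) (hn2 p) ((hd4 p).const_mul 12)
    (show (12:ℝ) * (1 + p ^ 2) ^ 4 ≠ 0 by positivity)
  have t3 := (hn3 p).div ((hd4 p).const_mul 4)
    (show (4:ℝ) * (1 + p ^ 2) ^ 4 ≠ 0 by positivity)
  have h := (t1.add t2).add t3
  refine h.congr_deriv ?_
  have hne : (1:ℝ) + p ^ 2 ≠ 0 := ne_of_gt h0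
  unfold Kc
  field_simp
  ring

/- pd equalities -/

private lemma pd1_phi (p q : ℝ) : pd₁ φLeg p q = G1 p q := (hphi1 p q).deriv

private lemma pd2_phi (p q : ℝ) : pd₂ φLeg p q = H1 p q := (hphi2 p q).deriv

private lemma pd11_phi (p q : ℝ) : pd₁ (pd₁ φLeg) p q = G2 p q := by
  show deriv (fun x => pd₁ φLeg x q) p = G2 p q
  have : (fun x => pd₁ φLeg x q) = fun x => G1 x q := funext fun x => pd1_phi x q
  rw [this]
  exact (hphi11 p q).deriv

private lemma pd12_phi (p q : ℝ) : pd₁ (pd₂ φLeg) p q = Kc p q := by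
  show deriv (fun x => pd₂ φLeg x q) p = Kc p q
  have : (fun x => pd₂ φLeg x q) = fun x => H1 x q := funext fun x => pd2_phi x q
  rw [this]
  exact (hphi12 p q).deriv

private lemma pd22_phi (p q : ℝ) : pd₂ (pd₂ φLeg) p q = H2 p q := by
  show deriv (fun y => pd₂ φLeg p y) q = H2 p q
  have : (fun y => pd₂ φLeg p y) = fun y => H1 p y := funext fun y => pd2_phi p y
  rw [this]
  exact (hphi22 p q).deriv

theorem phi_solves_legendre_eq :
    ∀ p q : ℝ,
      (1 + p ^ 2) * pd₁ (pd₁ (fun a b => (a ^ 3 - a) / (1 + a ^ 2) ^ 4 * b ^ 5 + (21 * a ^ 5 + 2 * a ^ 3 - 19 * a) / (12 * (1 + a ^ 2) ^ 4) * b ^ 3 + (3 * a ^ 7 + 4 * a ^ 5 - a ^ 3 - 2 * a) / (4 * (1 + a ^ 2) ^ 4) * b)) p q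
        + 2 * p * q * pd₁ (pd₂ (fun a b => (a ^ 3 - a) / (1 + a ^ 2) ^ 4 * b ^ 5 + (21 * a ^ 5 + 2 * a ^ 3 - 19 * a) / (12 * (1 + a ^ 2) ^ 4) * b ^ 3 + (3 * a ^ 7 + 4 * a ^ 5 - a ^ 3 - 2 * a) / (4 * (1 + a ^ 2) ^ 4) * b)) p q
        + (1 + q ^ 2) * pd₂ (pd₂ (fun a b => (a ^ 3 - a) / (1 + a ^ 2) ^ 4 * b ^ 5 + (21 * a ^ 5 + 2 * a ^ 3 - 19 * a) / (12 * (1 + a ^ 2) ^ 4) * b ^ 3 + (3 * a ^ 7 + 4 * a ^ 5 - a ^ 3 - 2 * a) / (4 * (1 + a ^ 2) ^ 4) * b)) p q = 0 := by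
  intro p q
  show (1 + p ^ 2) * pd₁ (pd₁ φLeg) p q + 2 * p * q * pd₁ (pd₂ φLeg) p q
      + (1 + q ^ 2) * pd₂ (pd₂ φLeg) p q = 0
  rw [pd11_phi, pd12_phi, pd22_phi]
  have hne : (1:ℝ) + p ^ 2 ≠ 0 := by positivity
  unfold G2 Kc H2
  field_simp
  ring
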